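/- arXiv:2009.02390 — 2 statements merged into one kernel-verified Lean document; each statement's English description precedes it below -/
import Mathlib

section
/- Let Y_1, …, Y_T be independent nonnegative random variables, each satisfying E[exp((λ/T)·Y_k)] ≤ exp(λσne/(T − λσe)) for all λ ∈ [0, T/(σe)). Then for any γ ≥ σne, choosing λ = T/(2σe) − nT/(2γ), one obtains Prob((1/T)Σ_{k=1}^T Y_k ≥ γ) ≤ exp(−(σne − γ)² T² / (2[(2T−1)γσe + n(σe)²])). -/
open MeasureTheory ProbabilityTheory Real

set_option maxHeartbeats 1000000 in
theorem chernoff_average_tail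
    {Ω : Type*} [MeasurableSpace Ω] (P : Measure Ω) [IsProbabilityMeasure P]
    (n T : ℕ) (hn : 1 ≤ n) (hT : 1 ≤ T) (σ : ℝ) (hσ : 0 < σ)
    (Y : Fin T → Ω → ℝ) (hpos : ∀ k ω, 0 ≤ Y k ω)
    (hmeas : ∀ k, Measurable (Y k))
    (hindep : iIndepFun Y P)
    (hint : ∀ (k : Fin T) (l : ℝ), 0 ≤ l → l < T / (σ * Real.exp 1) →
      Integrable (fun ω => Real.exp (l / T * Y k ω)) P)
    (hmgf : ∀ (k : Fin T) (l : ℝ), 0 ≤ l → l < T / (σ * Real.exp 1) →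
      ∫ ω, Real.exp (l / T * Y k ω) ∂P ≤
        Real.exp (l * σ * n * Real.exp 1 / (T - l * σ * Real.exp 1)))
    (γ : ℝ) (hγ : σ * n * Real.exp 1 ≤ γ) :
    P {ω | γ ≤ (1 / T : ℝ) * ∑ k, Y k ω} ≤
      ENNReal.ofReal (Real.exp (-(σ * n * Real.exp 1 - γ) ^ 2 * T ^ 2 /
        (2 * ((2 * T - 1) * γ * (σ * Real.exp 1) + n * (σ * Real.exp 1) ^ 2)))) := by
  set a : ℝ := σ * Real.exp 1 with ha_def
  have ha : 0 < a := mul_pos hσ (Real.exp_pos 1)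
  have hT' : (0:ℝ) < T := by exact_mod_cast Nat.lt_of_lt_of_le Nat.zero_lt_one hT
  have hT1 : (1:ℝ) ≤ T := by exact_mod_cast hT
  have hn' : (1:ℝ) ≤ n := by exact_mod_cast hn
  have hna : 0 < (n:ℝ) * a := mul_pos (by linarith) ha
  have hγna : (n:ℝ) * a ≤ γ := by nlinarith [hγ]
  have hγpos : 0 < γ := lt_of_lt_of_le hna hγna
  set t : ℝ := (γ - n * a) / (2 * a * γ) with ht_def
  set l : ℝ := T * t with hl_def
  have ht0 : 0 ≤ t := div_nonneg (by linarith) (by positivity)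
  have hl0 : 0 ≤ l := mul_nonneg hT'.le ht0
  have hta : t * a < 1 := by
    rw [ht_def, div_mul_eq_mul_div, div_lt_one (by positivity)]
    nlinarith
  have hllt : l < (T:ℝ) / a := by
    rw [hl_def, lt_div_iff₀ ha]
    nlinarith
  have hlT : l / T = t := by field_simp [hl_def]; exact hl_def
  -- integrability of each exp(t * Y k)
  have h_int_k : ∀ k : Fin T, Integrable (fun ω => Real.exp (t * Y k ω)) P := by
    intro k
    have := hint k l hl0 hllt
    simpa [hlT] using this
  have h_int_sum : Integrable (fun ω => Real.exp (t * (∑ k, Y k) ω)) P :=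
    hindep.integrable_exp_mul_sum hmeas (fun k _ => h_int_k k)
  -- event rewriting
  have hset : {ω | γ ≤ (1 / T : ℝ) * ∑ k, Y k ω} = {ω | (T:ℝ) * γ ≤ (∑ k, Y k) ω} := by
    ext ω
    simp only [Set.mem_setOf_eq, Finset.sum_apply]
    rw [one_div, inv_mul_eq_div, le_div_iff₀ hT', mul_comm γ (T:ℝ)]
  -- Chernoff
  have hcher := measure_ge_le_exp_mul_mgf (X := ∑ k, Y k) (μ := P) ((T:ℝ) * γ) ht0 h_int_sum
  -- mgf bound
  have hmgf_k : ∀ k : Fin T, mgf (Y k) P t ≤ Real.exp (l * σ * n * Real.exp 1 / (T - l * σ * Real.exp 1)) := by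
    intro k
    have := hmgf k l hl0 hllt
    simpa [mgf, hlT] using this
  have hmgf_sum : mgf (∑ k, Y k) P t ≤
      Real.exp ((T:ℝ) * (l * σ * n * Real.exp 1 / (T - l * σ * Real.exp 1))) := by
    rw [hindep.mgf_sum hmeas]
    calc ∏ k : Fin T, mgf (Y k) P t
        ≤ ∏ _k : Fin T, Real.exp (l * σ * n * Real.exp 1 / (T - l * σ * Real.exp 1)) :=
          Finset.prod_le_prod (fun k _ => mgf_nonneg) (fun k _ => hmgf_k k)
      _ = Real.exp ((T:ℝ) * (l * σ * n * Real.exp 1 / (T - l * σ * Real.exp 1))) := by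
          rw [Finset.prod_const, ← Real.exp_nat_mul]
          simp
  have hbound : (P {ω | (T:ℝ) * γ ≤ (∑ k, Y k) ω}).toReal ≤
      Real.exp (-t * ((T:ℝ) * γ) + (T:ℝ) * (l * σ * n * Real.exp 1 / (T - l * σ * Real.exp 1))) := by
    rw [Real.exp_add]
    exact hcher.trans (mul_le_mul_of_nonneg_left hmgf_sum (Real.exp_pos _).le)
  -- exponent comparison
  have hden1 : (0:ℝ) < γ + n * a := by linarith
  have hden2 : (0:ℝ) < 2 * ((2 * T - 1) * γ * a + n * a ^ 2) := by
    have h1 : 0 < (2*(T:ℝ)-1)*γ*a := mul_pos (mul_pos (by linarith) hγpos) ha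
    have h2 : 0 < (n:ℝ) * a ^ 2 := by positivity
    linarith
  have hE1 : -t * ((T:ℝ) * γ) + (T:ℝ) * (l * σ * n * Real.exp 1 / (T - l * σ * Real.exp 1))
      = -((T:ℝ) * (γ - n * a) ^ 2) / (2 * a * (γ + n * a)) := by
    have hlsa : l * σ * Real.exp 1 = l * a := by rw [ha_def]; ring
    have hTla : (T:ℝ) - l * σ * Real.exp 1 = T * (γ + n * a) / (2 * γ) := by
      rw [hlsa, hl_def, ht_def]
      field_simp
      ring
    rw [hTla, hl_def, ht_def]
    have h1 : l * σ * (n:ℝ) * Real.exp 1 = l * (n * a) := by rw [ha_def]; ring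
    field_simp
    ring
  have hE2 : -(σ * n * Real.exp 1 - γ) ^ 2 * (T:ℝ) ^ 2 /
        (2 * ((2 * T - 1) * γ * (σ * Real.exp 1) + n * (σ * Real.exp 1) ^ 2))
      = -((T:ℝ) ^ 2 * (γ - n * a) ^ 2) / (2 * ((2 * T - 1) * γ * a + n * a ^ 2)) := by
    rw [ha_def]; ring_nf
  have hExp : -((T:ℝ) * (γ - n * a) ^ 2) / (2 * a * (γ + n * a)) ≤
      -((T:ℝ) ^ 2 * (γ - n * a) ^ 2) / (2 * ((2 * T - 1) * γ * a + n * a ^ 2)) := by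
    rw [div_le_div_iff₀ (by positivity) hden2]
    have key : (0:ℝ) ≤ ((2 * T - 1) * γ + n * a) - T * (γ + n * a) := by
      have := mul_nonneg (sub_nonneg.mpr hT1) (sub_nonneg.mpr hγna)
      nlinarith
    have h : (0:ℝ) ≤ 2 * a * T * (γ - n * a) ^ 2 * (((2 * T - 1) * γ + n * a) - T * (γ + n * a)) :=
      mul_nonneg (by positivity) key
    linarith [h]
  -- conclude
  rw [hset, ENNReal.le_ofReal_iff_toReal_le (measure_ne_top P _) (Real.exp_pos _).le]
  calc (P {ω | (T:ℝ) * γ ≤ (∑ k, Y k) ω}).toReal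
      ≤ Real.exp (-t * ((T:ℝ) * γ) + (T:ℝ) * (l * σ * n * Real.exp 1 / (T - l * σ * Real.exp 1))) := hbound
    _ ≤ _ := by
        rw [Real.exp_le_exp, hE1, hE2]
        exact hExp
end

section
/- Let Y be a nonnegative random variable with Prob(Y ≥ η) ≤ 2n·exp(−η²/(2σ²)) for all η ≥ 0, and λ ∈ [0, T/(σe)) a real number, T ≥ 1. Then E[exp((λ/T)·Y)] ≤ 1 + λσne/(T − λσe) ≤ exp(λσne/(T − λσe)). -/
open MeasureTheory ProbabilityTheory Real

open Set Nat

lemma aux_even {Ω : Type*} [MeasurableSpace Ω] (P : Measure Ω) [IsProbabilityMeasure P]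
    (n : ℕ) (hn : 1 ≤ n) (σ : ℝ) (hσ : 0 < σ)
    (Y : Ω → ℝ) (hYmeas : Measurable Y) (hYpos : ∀ ω, 0 ≤ Y ω)
    (htail : ∀ η : ℝ, 0 ≤ η →
      P {ω | η ≤ Y ω} ≤ ENNReal.ofReal (2 * n * Real.exp (-η ^ 2 / (2 * σ ^ 2))))
    (k : ℕ) :
    ∫⁻ ω, ENNReal.ofReal (Y ω ^ (2*k)) ∂P ≤ ENNReal.ofReal (2*n*(2*σ^2)^k * k !) := by
  rcases Nat.eq_zero_or_pos k with hk | hk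
  · subst hk
    simp only [mul_zero, pow_zero, Nat.factorial_zero, Nat.cast_one, mul_one,
      ENNReal.ofReal_one, lintegral_one, measure_univ]
    rw [ENNReal.one_le_ofReal]
    have : (1:ℝ) ≤ n := by exact_mod_cast hn
    linarith
  · have hb : (0:ℝ) < (2*σ^2)⁻¹ := by positivity
    have hp : (0:ℝ) < ((2*k : ℕ) : ℝ) := by positivity
    have hq : (-1:ℝ) < ((2*k : ℕ) : ℝ) - 1 := by
      have : (1:ℝ) ≤ ((2*k:ℕ):ℝ) := by exact_mod_cast Nat.one_le_iff_ne_zero.2 (by omega)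
      linarith
    have key := lintegral_rpow_eq_lintegral_meas_le_mul P (f := Y)
      (Filter.Eventually.of_forall hYpos) hYmeas.aemeasurable hp
    have hconv : (fun ω => ENNReal.ofReal (Y ω ^ (2*k)))
        = fun ω => ENNReal.ofReal (Y ω ^ (((2*k:ℕ)):ℝ)) := by
      funext ω; rw [Real.rpow_natCast]
    rw [hconv, key]
    have step1 : ∫⁻ t in Ioi (0:ℝ), P {a | t ≤ Y a} * ENNReal.ofReal (t ^ (((2*k:ℕ):ℝ)-1)) ≤
        ∫⁻ t in Ioi (0:ℝ),
          ENNReal.ofReal ((2*n) * (t ^ (((2*k:ℕ):ℝ)-1) * Real.exp (-(2*σ^2)⁻¹ * t^2))) := by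
      refine lintegral_mono_ae ?_
      filter_upwards [ae_restrict_mem measurableSet_Ioi] with t ht
      have h1 : ((2:ℝ)*n) * (t ^ (((2*k:ℕ):ℝ)-1) * Real.exp (-(2*σ^2)⁻¹ * t^2))
          = (2*n*Real.exp (-t^2/(2*σ^2))) * t ^ (((2*k:ℕ):ℝ)-1) := by ring_nf
      rw [h1, ENNReal.ofReal_mul (by positivity)]
      exact mul_le_mul_left (htail t ht.le) _
    have hInt : IntegrableOn
        (fun t : ℝ => (2*(n:ℝ)) * (t ^ (((2*k:ℕ):ℝ)-1) * Real.exp (-(2*σ^2)⁻¹ * t^2)))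
        (Ioi 0) := (integrableOn_rpow_mul_exp_neg_mul_sq hb hq).const_mul _
    have step2 : ∫⁻ t in Ioi (0:ℝ),
          ENNReal.ofReal ((2*(n:ℝ)) * (t ^ (((2*k:ℕ):ℝ)-1) * Real.exp (-(2*σ^2)⁻¹ * t^2)))
        = ENNReal.ofReal (∫ t in Ioi (0:ℝ),
            (2*(n:ℝ)) * (t ^ (((2*k:ℕ):ℝ)-1) * Real.exp (-(2*σ^2)⁻¹ * t^2))) := by
      refine (ofReal_integral_eq_lintegral_ofReal hInt ?_).symm
      filter_upwards [ae_restrict_mem measurableSet_Ioi] with t ht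
      have := Real.rpow_nonneg ht.le (((2*k:ℕ):ℝ)-1)
      positivity
    have hval : ∫ t in Ioi (0:ℝ), t ^ (((2*k:ℕ):ℝ)-1) * Real.exp (-(2*σ^2)⁻¹ * t^2)
        = (2*σ^2)^k * (k-1)! / 2 := by
      have conv2 : ∫ t in Ioi (0:ℝ), t ^ (((2*k:ℕ):ℝ)-1) * Real.exp (-(2*σ^2)⁻¹ * t^2)
          = ∫ t in Ioi (0:ℝ), t ^ (((2*k:ℕ):ℝ)-1) * Real.exp (-(2*σ^2)⁻¹ * t^(2:ℝ)) := by
        refine setIntegral_congr_fun measurableSet_Ioi (fun t ht => ?_)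
        rw [Real.rpow_two]
      rw [conv2, integral_rpow_mul_exp_neg_mul_rpow two_pos hq hb]
      have eexp : (-(((2*k:ℕ):ℝ) - 1 + 1) / 2) = -((k:ℕ):ℝ) := by push_cast; ring
      have earg : ((((2*k:ℕ):ℝ) - 1 + 1) / 2) = ((k:ℕ):ℝ) := by push_cast; ring
      rw [eexp, earg]
      have e3 : Real.Gamma ((k:ℕ):ℝ) = (k-1)! := by
        have h4 : ((k:ℕ):ℝ) = ((k-1:ℕ):ℝ) + 1 := by
          rw [Nat.cast_sub hk]; ring
        rw [h4, Real.Gamma_nat_eq_factorial]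
      have epow : ((2*σ^2)⁻¹:ℝ) ^ (-((k:ℕ):ℝ)) = (2*σ^2)^k := by
        rw [Real.rpow_neg (by positivity), Real.inv_rpow (by positivity), inv_inv,
          Real.rpow_natCast]
      rw [e3, epow]; ring
    calc ENNReal.ofReal ((2*k:ℕ):ℝ) *
          ∫⁻ t in Ioi (0:ℝ), P {a | t ≤ Y a} * ENNReal.ofReal (t ^ (((2*k:ℕ):ℝ)-1))
        ≤ ENNReal.ofReal ((2*k:ℕ):ℝ) * ∫⁻ t in Ioi (0:ℝ),
          ENNReal.ofReal ((2*n) * (t ^ (((2*k:ℕ):ℝ)-1) * Real.exp (-(2*σ^2)⁻¹ * t^2))) :=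
          mul_le_mul_right step1 _
      _ = ENNReal.ofReal ((2*k:ℕ):ℝ) * ENNReal.ofReal (∫ t in Ioi (0:ℝ),
          (2*(n:ℝ)) * (t ^ (((2*k:ℕ):ℝ)-1) * Real.exp (-(2*σ^2)⁻¹ * t^2))) := by rw [step2]
      _ = ENNReal.ofReal (2*n*(2*σ^2)^k * k !) := by
          rw [integral_const_mul, hval, ← ENNReal.ofReal_mul (by positivity)]
          congr 1
          have hfac : ((k ! : ℕ):ℝ) = (k:ℝ) * (((k-1)! : ℕ):ℝ) := by
            exact_mod_cast (Nat.mul_factorial_pred hk.ne').symm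
          push_cast [hfac]
          ring

set_option maxHeartbeats 2000000 in
lemma aux_moment {Ω : Type*} [MeasurableSpace Ω] (P : Measure Ω) [IsProbabilityMeasure P]
    (n : ℕ) (σ : ℝ) (Y : Ω → ℝ)
    (htail : ∀ η : ℝ, 0 ≤ η →
      P {ω | η ≤ Y ω} ≤ ENNReal.ofReal (2 * n * Real.exp (-η ^ 2 / (2 * σ ^ 2))))
    (hn : 1 ≤ n) (hσ : 0 < σ) (hYmeas : Measurable Y) (hYpos : ∀ ω, 0 ≤ Y ω)
    (m : ℕ) (hm : 1 ≤ m) :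
    ∫⁻ ω, ENNReal.ofReal (Y ω ^ m) ∂P
      ≤ ENNReal.ofReal (n * σ^m * Real.exp 1 ^ m * m !) := by
  have h2e : (2:ℝ) ≤ Real.exp 1 := by
    have := Real.exp_one_gt_d9; linarith
  have hn' : (1:ℝ) ≤ n := by exact_mod_cast hn
  rcases Nat.even_or_odd m with ⟨k, hk⟩ | ⟨k, hk⟩
  · -- even, m = 2k, k ≥ 1
    have hmk : m = 2*k := by omega
    have hk1 : 1 ≤ k := by omega
    subst hmk
    refine (aux_even P n hn σ hσ Y hYmeas hYpos htail k).trans (ENNReal.ofReal_le_ofReal ?_)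
    have c1 : (2:ℝ) * 2^k * (k ! : ℝ) ≤ (Real.exp 1)^(2*k) * ((2*k)! : ℝ) := by
      have h1 : (2:ℝ) ≤ 2^k := by
        calc (2:ℝ) = 2^1 := (pow_one 2).symm
        _ ≤ 2^k := pow_le_pow_right₀ one_le_two hk1
      have h2 : ((k !:ℕ):ℝ) ≤ (((2*k)!:ℕ):ℝ) := by
        exact_mod_cast Nat.factorial_le (by omega)
      have h3 : (2:ℝ)^(2*k) ≤ (Real.exp 1)^(2*k) := pow_le_pow_left₀ (by norm_num) h2e _
      calc (2:ℝ) * 2^k * (k ! : ℝ) ≤ 2^k * 2^k * ((2*k)! : ℝ) := by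
            have h4 : (0:ℝ) ≤ 2^k := by positivity
            exact mul_le_mul (mul_le_mul_of_nonneg_right h1 h4) h2
              (by positivity) (by positivity)
        _ = (2:ℝ)^(2*k) * ((2*k)! : ℝ) := by rw [two_mul, pow_add]
        _ ≤ (Real.exp 1)^(2*k) * ((2*k)! : ℝ) := by
            exact mul_le_mul_of_nonneg_right h3 (by positivity)
    have expand : (2:ℝ)*n*(2*σ^2)^k * (k !:ℝ) = n * σ^(2*k) * (2*2^k*(k !:ℝ)) := by
      rw [mul_pow, pow_mul]; ring
    rw [expand]
    calc (n:ℝ) * σ^(2*k) * (2*2^k*(k !:ℝ))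
        ≤ (n:ℝ) * σ^(2*k) * ((Real.exp 1)^(2*k) * ((2*k)! : ℝ)) := by
          exact mul_le_mul_of_nonneg_left c1 (by positivity)
      _ = (n:ℝ) * σ^(2*k) * Real.exp 1 ^(2*k) * ((2*k)! : ℝ) := by ring
  · -- odd, m = 2k+1
    subst hk
    have hpt : ∀ ω, Y ω ^ (2*k+1) ≤ σ/2 * Y ω ^(2*k) + (2*σ)⁻¹ * Y ω ^(2*(k+1)) := by
      intro ω
      set y := Y ω with hy
      have hy0 : 0 ≤ y := hYpos ω
      rw [← sub_nonneg]
      have key : σ/2 * y^(2*k) + (2*σ)⁻¹ * y^(2*(k+1)) - y^(2*k+1)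
          = (2*σ)⁻¹ * (y^(2*k) * (y - σ)^2) := by
        field_simp
        ring
      rw [key]
      positivity
    have meas1 : Measurable fun ω => ENNReal.ofReal (σ/2 * Y ω ^(2*k)) :=
      ENNReal.measurable_ofReal.comp ((hYmeas.pow_const _).const_mul _)
    have hsplit : ∫⁻ ω, ENNReal.ofReal (Y ω ^ (2*k+1)) ∂P
        ≤ ENNReal.ofReal (σ/2) * ∫⁻ ω, ENNReal.ofReal (Y ω ^(2*k)) ∂P
          + ENNReal.ofReal ((2*σ)⁻¹) * ∫⁻ ω, ENNReal.ofReal (Y ω ^(2*(k+1))) ∂P := by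
      have step : ∫⁻ ω, ENNReal.ofReal (Y ω ^ (2*k+1)) ∂P
          ≤ ∫⁻ ω, (ENNReal.ofReal (σ/2 * Y ω ^(2*k))
              + ENNReal.ofReal ((2*σ)⁻¹ * Y ω ^(2*(k+1)))) ∂P := by
        refine lintegral_mono fun ω => ?_
        rw [← ENNReal.ofReal_add
          (mul_nonneg (by positivity) (pow_nonneg (hYpos ω) _))
          (mul_nonneg (by positivity) (pow_nonneg (hYpos ω) _))]
        exact ENNReal.ofReal_le_ofReal (hpt ω)
      refine step.trans ?_
      rw [lintegral_add_left meas1]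
      have r1 : ∫⁻ ω, ENNReal.ofReal (σ/2 * Y ω ^(2*k)) ∂P
          = ENNReal.ofReal (σ/2) * ∫⁻ ω, ENNReal.ofReal (Y ω ^(2*k)) ∂P := by
        simp_rw [ENNReal.ofReal_mul (by positivity : (0:ℝ) ≤ σ/2)]
        exact lintegral_const_mul' _ _ ENNReal.ofReal_ne_top
      have r2 : ∫⁻ ω, ENNReal.ofReal ((2*σ)⁻¹ * Y ω ^(2*(k+1))) ∂P
          = ENNReal.ofReal ((2*σ)⁻¹) * ∫⁻ ω, ENNReal.ofReal (Y ω ^(2*(k+1))) ∂P := by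
        simp_rw [ENNReal.ofReal_mul (by positivity : (0:ℝ) ≤ (2*σ)⁻¹)]
        exact lintegral_const_mul' _ _ ENNReal.ofReal_ne_top
      rw [r1, r2]
    rcases Nat.eq_zero_or_pos k with hk0 | hk1
    · -- m = 1
      subst hk0
      have hM0 : ∫⁻ ω, ENNReal.ofReal (Y ω ^(2*0)) ∂P = 1 := by
        simp
      have hE2 := aux_even P n hn σ hσ Y hYmeas hYpos htail 1
      have h25 : (2.5:ℝ) ≤ Real.exp 1 := by
        have := Real.exp_one_gt_d9; linarith
      refine hsplit.trans ?_
      rw [hM0, mul_one]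
      calc ENNReal.ofReal (σ/2)
            + ENNReal.ofReal ((2*σ)⁻¹) * ∫⁻ ω, ENNReal.ofReal (Y ω ^(2*(0+1))) ∂P
          ≤ ENNReal.ofReal (σ/2) + ENNReal.ofReal ((2*σ)⁻¹)
              * ENNReal.ofReal (2*n*(2*σ^2)^1 * 1!) :=
            add_le_add_right (mul_le_mul_right hE2 _) _
        _ = ENNReal.ofReal (σ/2 + (2*σ)⁻¹ * (2*n*(2*σ^2)^1 * 1!)) := by
            rw [← ENNReal.ofReal_mul (by positivity), ← ENNReal.ofReal_add (by positivity)
              (by positivity)]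
        _ ≤ ENNReal.ofReal (n * σ^(2*0+1) * Real.exp 1 ^ (2*0+1) * (2*0+1)!) := by
            refine ENNReal.ofReal_le_ofReal ?_
            have hexp : (2*σ)⁻¹ * (2*(n:ℝ)*(2*σ^2)^1 * (1! : ℕ)) = 2*n*σ := by
              field_simp; ring
            rw [hexp]
            norm_num
            have h : (1/2:ℝ) ≤ n * (Real.exp 1 - 2) := by nlinarith [hn', h25]
            nlinarith [mul_le_mul_of_nonneg_left h hσ.le]
    · -- m = 2k+1, k ≥ 1
      refine hsplit.trans ?_
      have hE1 := aux_even P n hn σ hσ Y hYmeas hYpos htail k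
      have hE2 := aux_even P n hn σ hσ Y hYmeas hYpos htail (k+1)
      calc ENNReal.ofReal (σ/2) * ∫⁻ ω, ENNReal.ofReal (Y ω ^(2*k)) ∂P
            + ENNReal.ofReal ((2*σ)⁻¹) * ∫⁻ ω, ENNReal.ofReal (Y ω ^(2*(k+1))) ∂P
          ≤ ENNReal.ofReal (σ/2) * ENNReal.ofReal (2*n*(2*σ^2)^k * k !)
            + ENNReal.ofReal ((2*σ)⁻¹) * ENNReal.ofReal (2*n*(2*σ^2)^(k+1) * (k+1)!) :=
            add_le_add (mul_le_mul_right hE1 _) (mul_le_mul_right hE2 _)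
        _ = ENNReal.ofReal (σ/2 * (2*n*(2*σ^2)^k * k !)
              + (2*σ)⁻¹ * (2*n*(2*σ^2)^(k+1) * (k+1)!)) := by
            rw [← ENNReal.ofReal_mul (by positivity), ← ENNReal.ofReal_mul (by positivity),
              ← ENNReal.ofReal_add (by positivity) (by positivity)]
        _ ≤ ENNReal.ofReal (n * σ^(2*k+1) * Real.exp 1 ^ (2*k+1) * (2*k+1)!) := by
            refine ENNReal.ofReal_le_ofReal ?_
            have expand : σ/2 * (2*(n:ℝ)*(2*σ^2)^k * k !)
                + (2*σ)⁻¹ * (2*(n:ℝ)*(2*σ^2)^(k+1) * (k+1)!)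
                = (n:ℝ) * σ^(2*k+1) * (2^k * (k ! : ℝ) + 2^(k+1) * ((k+1)! : ℝ)) := by
              field_simp
              ring
            rw [expand]
            have key : (2:ℝ)^k * (k ! : ℝ) + 2^(k+1) * ((k+1)! : ℝ)
                ≤ (Real.exp 1)^(2*k+1) * ((2*k+1)! : ℝ) := by
              have c1 : (2:ℝ)^k * (k ! : ℝ) ≤ 2^(k+1) * ((k+1)! : ℝ) := by
                refine mul_le_mul (pow_le_pow_right₀ one_le_two (by omega)) ?_
                  (by positivity) (by positivity)
                exact_mod_cast Nat.factorial_le (by omega)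
              have c2 : (2:ℝ)^(k+2) * ((k+1)! : ℝ) ≤ 2^(2*k+1) * ((2*k+1)! : ℝ) := by
                refine mul_le_mul (pow_le_pow_right₀ one_le_two (by omega)) ?_
                  (by positivity) (by positivity)
                exact_mod_cast Nat.factorial_le (by omega)
              have c3 : (2:ℝ)^(2*k+1) * ((2*k+1)! : ℝ)
                  ≤ (Real.exp 1)^(2*k+1) * ((2*k+1)! : ℝ) := by
                exact mul_le_mul_of_nonneg_right
                  (pow_le_pow_left₀ (by norm_num) h2e _) (by positivity)
              have e4 : (2:ℝ)^(k+2) * ((k+1)! : ℝ) = 2 * (2^(k+1) * ((k+1)! : ℝ)) := by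
                rw [pow_succ]; ring
              linarith [c1, c2, c3]
            calc (n:ℝ) * σ^(2*k+1) * (2^k * (k ! : ℝ) + 2^(k+1) * ((k+1)! : ℝ))
                ≤ (n:ℝ) * σ^(2*k+1) * ((Real.exp 1)^(2*k+1) * ((2*k+1)! : ℝ)) :=
                  mul_le_mul_of_nonneg_left key (by positivity)
              _ = (n:ℝ) * σ^(2*k+1) * Real.exp 1 ^ (2*k+1) * ((2*k+1)! : ℝ) := by ring


theorem mgf_bound_of_subgaussian_tail
    {Ω : Type*} [MeasurableSpace Ω] (P : Measure Ω) [IsProbabilityMeasure P]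
    (n : ℕ) (hn : 1 ≤ n) (σ : ℝ) (hσ : 0 < σ) (T : ℝ) (hT : 1 ≤ T)
    (Y : Ω → ℝ) (hYmeas : Measurable Y) (hYpos : ∀ ω, 0 ≤ Y ω)
    (htail : ∀ η : ℝ, 0 ≤ η →
      P {ω | η ≤ Y ω} ≤ ENNReal.ofReal (2 * n * Real.exp (-η ^ 2 / (2 * σ ^ 2))))
    (l : ℝ) (hl : 0 ≤ l) (hl' : l < T / (σ * Real.exp 1)) :
    ∫ ω, Real.exp (l / T * Y ω) ∂P ≤ 1 + l * σ * n * Real.exp 1 / (T - l * σ * Real.exp 1)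
      ∧ 1 + l * σ * n * Real.exp 1 / (T - l * σ * Real.exp 1) ≤
        Real.exp (l * σ * n * Real.exp 1 / (T - l * σ * Real.exp 1)) := by
  have he : (0:ℝ) < Real.exp 1 := Real.exp_pos 1
  have hT0 : (0:ℝ) < T := by linarith
  have hσe : (0:ℝ) < σ * Real.exp 1 := by positivity
  have hlT : l * σ * Real.exp 1 < T := by
    have := (lt_div_iff₀ hσe).mp hl'
    nlinarith
  have hTl : (0:ℝ) < T - l * σ * Real.exp 1 := by linarith
  set c : ℝ := l / T with hc
  have hc0 : 0 ≤ c := div_nonneg hl hT0.le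
  set q : ℝ := l * σ * Real.exp 1 / T with hqdef
  have hq0 : 0 ≤ q := by positivity
  have hq1 : q < 1 := by rw [hqdef, div_lt_one hT0]; exact hlT
  set R : ℝ := l * σ * n * Real.exp 1 / (T - l * σ * Real.exp 1) with hRdef
  have hR0 : 0 ≤ R := by rw [hRdef]; positivity
  have hRq : R = n * q * (1 - q)⁻¹ := by
    rw [hRdef, hqdef]
    rw [show (1:ℝ) - l * σ * Real.exp 1 / T = (T - l * σ * Real.exp 1)/T by field_simp]
    field_simp
  constructor
  · -- MGF bound
    have hlint : ∫⁻ ω, ENNReal.ofReal (Real.exp (c * Y ω)) ∂P ≤ ENNReal.ofReal (1 + R) := by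
      have hptw : ∀ ω, ENNReal.ofReal (Real.exp (c * Y ω))
          = ∑' m : ℕ, ENNReal.ofReal ((c * Y ω)^m / m !) := by
        intro ω
        rw [Real.exp_eq_exp_ℝ, NormedSpace.exp_eq_tsum_div]
        exact ENNReal.ofReal_tsum_of_nonneg
          (fun m => div_nonneg (pow_nonneg (mul_nonneg hc0 (hYpos ω)) m) (by positivity))
          (Real.summable_pow_div_factorial _)
      calc ∫⁻ ω, ENNReal.ofReal (Real.exp (c * Y ω)) ∂P
          = ∑' m : ℕ, ∫⁻ ω, ENNReal.ofReal ((c * Y ω)^m / m !) ∂P := by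
            simp_rw [hptw]
            exact lintegral_tsum fun m =>
              ((((hYmeas.const_mul c).pow_const m).div_const _).ennreal_ofReal).aemeasurable
        _ = ∑' m : ℕ, ENNReal.ofReal (c^m / m !) * ∫⁻ ω, ENNReal.ofReal (Y ω ^ m) ∂P := by
            refine tsum_congr fun m => ?_
            have hptm : ∀ ω, ((c * Y ω)^m / m ! : ℝ) = c^m / m ! * Y ω ^ m := fun ω => by
              rw [mul_pow]; ring
            simp_rw [hptm, ENNReal.ofReal_mul (by positivity : (0:ℝ) ≤ c^m / m !)]
            exact lintegral_const_mul' _ _ ENNReal.ofReal_ne_top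
        _ ≤ ENNReal.ofReal 1 + ∑' m : ℕ, ENNReal.ofReal (n * q^(m+1)) := by
            rw [tsum_eq_zero_add' ENNReal.summable]
            refine add_le_add ?_ (ENNReal.tsum_le_tsum fun m => ?_)
            · simp
            · refine (mul_le_mul_right (aux_moment P n σ Y htail hn hσ hYmeas hYpos (m+1)
                (by omega)) _).trans ?_
              rw [← ENNReal.ofReal_mul (by positivity : (0:ℝ) ≤ c^(m+1) / (m+1)!)]
              refine ENNReal.ofReal_le_ofReal (le_of_eq ?_)
              have hpow : c^(m+1) * σ^(m+1) * Real.exp 1^(m+1) = q^(m+1) := by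
                rw [← mul_pow, ← mul_pow]
                congr 1
                rw [hc, hqdef]
                field_simp
              have hfac : (0:ℝ) < ((m+1)! : ℝ) := by
                exact_mod_cast Nat.factorial_pos (m+1)
              rw [show c^(m+1)/((m+1)! : ℝ)
                    * ((n:ℝ)*σ^(m+1)*Real.exp 1^(m+1)*((m+1)! : ℝ))
                  = (n:ℝ) * (c^(m+1)*σ^(m+1)*Real.exp 1^(m+1))
                    * (((m+1)! : ℝ)/((m+1)! : ℝ)) from by ring,
                div_self hfac.ne', mul_one, hpow]
        _ = ENNReal.ofReal (1 + R) := by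
            have hgeom : Summable fun m : ℕ => (n : ℝ) * q^(m+1) := by
              have : (fun m : ℕ => (n : ℝ) * q^(m+1)) = fun m : ℕ => ((n : ℝ) * q) * q^m := by
                funext m; rw [pow_succ]; ring
              rw [this]
              exact (summable_geometric_of_lt_one hq0 hq1).mul_left _
            rw [← ENNReal.ofReal_tsum_of_nonneg (fun m => mul_nonneg (by positivity) (pow_nonneg hq0 _)) hgeom,
              ← ENNReal.ofReal_add (by norm_num)
                (tsum_nonneg fun m => mul_nonneg (by positivity) (pow_nonneg hq0 _))]
            congr 1
            have : ∑' m : ℕ, (n : ℝ) * q^(m+1) = ((n : ℝ) * q) * ∑' m : ℕ, q^m := by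
              rw [← tsum_mul_left]
              exact tsum_congr fun m => by rw [pow_succ]; ring
            rw [this, tsum_geometric_of_lt_one hq0 hq1, hRq]
    have heq : ∫ ω, Real.exp (c * Y ω) ∂P
        = (∫⁻ ω, ENNReal.ofReal (Real.exp (c * Y ω)) ∂P).toReal := by
      refine integral_eq_lintegral_of_nonneg_ae (ae_of_all _ fun ω => (Real.exp_pos _).le) ?_
      exact ((hYmeas.const_mul c).exp).aestronglyMeasurable
    rw [heq]
    exact ENNReal.toReal_le_of_le_ofReal (by linarith) hlint
  · have := Real.add_one_le_exp R
    linarith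
end
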